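/- Let β be a satisfiable finite set of atomic comparisons over V and, for i = 1, …, k, let βᵢ be a finite nonempty set of ACs consisting of closed LSI ACs (x ≤ c) together with at most one open RSI AC (x > c). If β entails the disjunction ⋁ᵢ (⋀ βᵢ), then there exists i such that either (i) β entails every member of βᵢ, or (ii) there is exactly one e ∈ βᵢ such that β does not entail e, and β entails every member of βᵢ other than e. -/
import Mathlib


namespace QC

/-- A term is a variable in `V` or a real constant. -/
inductive Term (V : Type) where
  | var : V → Term V
  | const : ℝ → Term V

/-- The comparison relations `<, ≤, =, ≠`. -/
inductive Rel where
  | lt | le | eq | ne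

/-- A comparison between two terms.  (`x ≥ c` is represented as `c ≤ x`, etc.) -/
structure Comp (V : Type) where
  rel : Rel
  lhs : Term V
  rhs : Term V

def Term.eval {V : Type} (σ : V → ℝ) : Term V → ℝ
  | .var x => σ x
  | .const c => c

def Rel.holds : Rel → ℝ → ℝ → Prop
  | .lt => fun a b => a < b
  | .le => fun a b => a ≤ b
  | .eq => fun a b => a = b
  | .ne => fun a b => a ≠ b

/-- An assignment `σ : V → ℝ` satisfies a comparison. -/
def Comp.holds {V : Type} (a : Comp V) (σ : V → ℝ) : Prop :=
  a.rel.holds (a.lhs.eval σ) (a.rhs.eval σ)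

def Term.isVar {V : Type} : Term V → Prop
  | .var _ => True
  | .const _ => False

/-- An atomic comparison: at least one side is a variable. -/
def IsAC {V : Type} (a : Comp V) : Prop := a.lhs.isVar ∨ a.rhs.isVar

/-- `σ` satisfies every comparison in the finite set `F`. -/
def Sat {V : Type} (F : Finset (Comp V)) (σ : V → ℝ) : Prop := ∀ a ∈ F, a.holds σ

/-- A closed LSI comparison: `x ≤ c`. -/
def IsClosedLSI {V : Type} (a : Comp V) : Prop :=
  ∃ (x : V) (c : ℝ), a = ⟨Rel.le, Term.var x, Term.const c⟩

/-- An open LSI comparison: `x < c`. -/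
def IsOpenLSI {V : Type} (a : Comp V) : Prop :=
  ∃ (x : V) (c : ℝ), a = ⟨Rel.lt, Term.var x, Term.const c⟩

/-- A closed RSI comparison: `x ≥ c`, represented as `c ≤ x`. -/
def IsClosedRSI {V : Type} (a : Comp V) : Prop :=
  ∃ (x : V) (c : ℝ), a = ⟨Rel.le, Term.const c, Term.var x⟩

/-- An open RSI comparison: `x > c`, represented as `c < x`. -/
def IsOpenRSI {V : Type} (a : Comp V) : Prop :=
  ∃ (x : V) (c : ℝ), a = ⟨Rel.lt, Term.const c, Term.var x⟩

/-- case 1 of Proposition 7.2: as Proposition 7.1, but each `βᵢ`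
consists of closed LSI comparisons together with at most one open RSI comparison. -/
theorem stmt10 {V : Type} (β : Finset (Comp V))
    (hAC : ∀ a ∈ β, IsAC a)
    (hsat : ∃ σ : V → ℝ, Sat β σ)
    (k : ℕ) (B : Fin k → Finset (Comp V))
    (hBne : ∀ i, (B i).Nonempty)
    (hSI : ∀ i, ∀ a ∈ B i, IsClosedLSI a ∨ IsOpenRSI a)
    (hone : ∀ i, ∀ a ∈ B i, ∀ b ∈ B i, IsOpenRSI a → IsOpenRSI b → a = b)
    (hent : ∀ σ : V → ℝ, Sat β σ → ∃ i, ∀ a ∈ B i, a.holds σ) :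
    ∃ i, (∀ e ∈ B i, ∀ σ : V → ℝ, Sat β σ → e.holds σ) ∨
      (∃ e ∈ B i, (¬ ∀ σ : V → ℝ, Sat β σ → e.holds σ) ∧
        ∀ e' ∈ B i, e' ≠ e → ∀ σ : V → ℝ, Sat β σ → e'.holds σ) := by
  classical
  by_contra hcon
  push_neg at hcon
  -- Step 1: for each i, extract a non-entailed closed LSI comparison with a witness
  have key : ∀ i : Fin k, ∃ (x : V) (c : ℝ) (τ : V → ℝ),
      (⟨Rel.le, Term.var x, Term.const c⟩ : Comp V) ∈ B i ∧ Sat β τ ∧ c < τ x := by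
    intro i
    obtain ⟨⟨e, he, hne⟩, hsecond⟩ := hcon i
    obtain ⟨e', he', hne', hnee'⟩ := hsecond e he hne
    have pick : ∃ f, f ∈ B i ∧ IsClosedLSI f ∧ ∃ σ, Sat β σ ∧ ¬f.holds σ := by
      rcases hSI i e he with hL | hR
      · exact ⟨e, he, hL, hne⟩
      · rcases hSI i e' he' with hL' | hR'
        · exact ⟨e', he', hL', hnee'⟩
        · exact absurd (hone i e' he' e he hR' hR) hne'
    obtain ⟨f, hf, ⟨x, c, rfl⟩, σ', hσ', hnh⟩ := pick
    refine ⟨x, c, σ', hf, hσ', ?_⟩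
    simpa [Comp.holds, Rel.holds, Term.eval, not_le] using hnh
  choose x c τ hmem hSatτ hgt using key
  -- Step 2: k > 0
  obtain ⟨σ0, hσ0⟩ := hsat
  obtain ⟨i0, -⟩ := hent σ0 hσ0
  have hk : 0 < k := i0.pos
  have hne : (Finset.univ : Finset (Fin k)).Nonempty := ⟨i0, Finset.mem_univ _⟩
  set z : Fin k := ⟨0, hk⟩ with hz
  have hzval : ((z : Fin k) : ℝ) = 0 := by simp [hz]
  -- Step 3: choose a small generic η > 0
  set D : Fin k → ℝ := fun i => (τ i (x i) - c i) / ((i : ℝ) + 1) with hD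
  have hDpos : ∀ i, 0 < D i := by
    intro i
    have h1 : (0:ℝ) < τ i (x i) - c i := by linarith [hgt i]
    have h2 : (0:ℝ) < (i : ℝ) + 1 := by positivity
    exact div_pos h1 h2
  set η₀ : ℝ := Finset.univ.inf' hne D with hη₀def
  have hη₀ : 0 < η₀ := (Finset.lt_inf'_iff hne).2 fun i _ => hDpos i
  set Bad : Finset ℝ := (β ×ˢ (Finset.univ : Finset (Fin k × Fin k))).image
    (fun p => (Term.eval (τ p.2.1) p.1.lhs - Term.eval (τ p.2.2) p.1.rhs)
      / ((p.2.1 : ℝ) - (p.2.2 : ℝ))) with hBad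
  have hinf : ((Set.Ioo (0:ℝ) η₀) \ ↑Bad).Nonempty :=
    Set.Infinite.nonempty ((Set.Ioo_infinite hη₀).diff (Bad.finite_toSet))
  obtain ⟨η, ⟨hη0, hηlt⟩, hηbad⟩ := hinf
  -- bound property
  have hηD : ∀ i : Fin k, (i:ℝ) * η < τ i (x i) - c i := by
    intro i
    have h1 : η < D i := lt_of_lt_of_le hηlt (Finset.inf'_le _ (Finset.mem_univ i))
    have h2 : (0:ℝ) < (i : ℝ) + 1 := by positivity
    have h3 : η * ((i:ℝ) + 1) < τ i (x i) - c i := (lt_div_iff₀ h2).1 h1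
    nlinarith
  -- genericity property
  have hgen : ∀ a ∈ β, ∀ i j : Fin k, i ≠ j →
      Term.eval (τ i) a.lhs - (i:ℝ)*η ≠ Term.eval (τ j) a.rhs - (j:ℝ)*η := by
    intro a ha i j hij heq
    have hvij : ((i:ℕ):ℝ) ≠ ((j:ℕ):ℝ) := by
      exact_mod_cast fun h => hij (Fin.ext h)
    apply hηbad
    refine Finset.mem_coe.2 (Finset.mem_image.2 ⟨⟨a, (i, j)⟩, ?_, ?_⟩)
    · exact Finset.mem_product.2 ⟨ha, Finset.mem_univ _⟩
    · have hsub : ((i:ℝ) - (j:ℝ)) ≠ 0 := sub_ne_zero.2 hvij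
      field_simp
      linarith [heq]
  -- Step 4: the combined assignment
  set ρ : V → ℝ := fun v => Finset.univ.sup' hne (fun i : Fin k => τ i v - (i:ℝ)*η) with hρ
  have hρle : ∀ (v : V) (r : ℝ), (∀ i : Fin k, τ i v ≤ r) → ρ v ≤ r := by
    intro v r h
    refine Finset.sup'_le hne _ fun i _ => ?_
    have : (0:ℝ) ≤ (i:ℝ)*η := by positivity
    have := h i
    linarith
  have hρlt : ∀ (v : V) (r : ℝ), (∀ i : Fin k, τ i v < r) → ρ v < r := by
    intro v r h
    refine (Finset.sup'_lt_iff hne).2 fun i _ => ?_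
    have : (0:ℝ) ≤ (i:ℝ)*η := by positivity
    have := h i
    linarith
  have hρge : ∀ (v : V) (i : Fin k), τ i v - (i:ℝ)*η ≤ ρ v := by
    intro v i
    simp only [hρ]
    exact Finset.le_sup' (fun j : Fin k => τ j v - (j:ℝ)*η) (Finset.mem_univ i)
  have hρz : ∀ v : V, τ z v ≤ ρ v := by
    intro v
    have := hρge v z
    rw [hzval] at this
    linarith
  -- Step 5: ρ satisfies β
  have hSatρ : Sat β ρ := by
    intro a ha
    have hτa : ∀ i : Fin k, a.holds (τ i) := fun i => hSatτ i a ha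
    obtain ⟨rel, lhs, rhs⟩ := a
    unfold Comp.holds at hτa ⊢
    dsimp only at hτa ⊢
    cases rel with
    | lt =>
      simp only [Rel.holds] at hτa ⊢
      cases lhs with
      | var u =>
        cases rhs with
        | var v =>
          refine (Finset.sup'_lt_iff hne).2 fun i _ => ?_
          calc τ i u - (i:ℝ)*η < τ i v - (i:ℝ)*η := by
                have := hτa i; simp [Term.eval] at this; linarith
            _ ≤ ρ v := hρge v i
        | const r =>
          refine hρlt u r fun i => ?_
          have := hτa i; simpa [Term.eval] using this
      | const r =>
        cases rhs with
        | var v =>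
          have h1 : r < τ z v := by have := hτa z; simpa [Term.eval] using this
          exact lt_of_lt_of_le h1 (hρz v)
        | const r' =>
          have := hτa z; simpa [Term.eval] using this
    | le =>
      simp only [Rel.holds] at hτa ⊢
      cases lhs with
      | var u =>
        cases rhs with
        | var v =>
          refine Finset.sup'_le hne _ fun i _ => ?_
          calc τ i u - (i:ℝ)*η ≤ τ i v - (i:ℝ)*η := by
                have := hτa i; simp [Term.eval] at this; linarith
            _ ≤ ρ v := hρge v i
        | const r =>
          refine hρle u r fun i => ?_
          have := hτa i; simpa [Term.eval] using this
      | const r =>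
        cases rhs with
        | var v =>
          have h1 : r ≤ τ z v := by have := hτa z; simpa [Term.eval] using this
          exact le_trans h1 (hρz v)
        | const r' =>
          have := hτa z; simpa [Term.eval] using this
    | eq =>
      simp only [Rel.holds] at hτa ⊢
      cases lhs with
      | var u =>
        cases rhs with
        | var v =>
          show ρ u = ρ v
          have hfun : ∀ i : Fin k, τ i u = τ i v := by
            intro i; have := hτa i; simpa [Term.eval] using this
          simp only [hρ]
          congr 1
          funext i
          rw [hfun i]
        | const r =>
          have hall : ∀ i : Fin k, τ i u = r := by
            intro i; have := hτa i; simpa [Term.eval] using this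
          show ρ u = r
          refine le_antisymm (hρle u r fun i => le_of_eq (hall i)) ?_
          have := hρz u
          rw [hall z] at this
          exact this
      | const r =>
        cases rhs with
        | var v =>
          have hall : ∀ i : Fin k, r = τ i v := by
            intro i; have := hτa i; simpa [Term.eval] using this
          show r = ρ v
          refine le_antisymm ?_ (hρle v r fun i => le_of_eq (hall i).symm)
          have := hρz v
          rw [← hall z] at this
          exact this
        | const r' =>
          have := hτa z; simpa [Term.eval] using this
    | ne =>
      simp only [Rel.holds] at hτa ⊢
      cases lhs with
      | var u =>
        cases rhs with
        | var v =>
          show ρ u ≠ ρ v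
          obtain ⟨i, -, hi⟩ := Finset.exists_mem_eq_sup' hne (fun i : Fin k => τ i u - (i:ℝ)*η)
          obtain ⟨j, -, hj⟩ := Finset.exists_mem_eq_sup' hne (fun i : Fin k => τ i v - (i:ℝ)*η)
          show Finset.univ.sup' hne (fun i : Fin k => τ i u - (i:ℝ)*η)
            ≠ Finset.univ.sup' hne (fun i : Fin k => τ i v - (i:ℝ)*η)
          rw [hi, hj]
          by_cases hij : i = j
          · subst hij
            have := hτa i
            simp [Term.eval] at this
            intro hcontra
            exact this (by linarith)
          · have := hgen ⟨Rel.ne, Term.var u, Term.var v⟩ ha i j hij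
            simpa [Term.eval] using this
        | const r =>
          show ρ u ≠ r
          obtain ⟨i, -, hi⟩ := Finset.exists_mem_eq_sup' hne (fun i : Fin k => τ i u - (i:ℝ)*η)
          show Finset.univ.sup' hne (fun i : Fin k => τ i u - (i:ℝ)*η) ≠ r
          rw [hi]
          by_cases hiz : i = z
          · rw [hiz, hzval]
            have := hτa z
            simp [Term.eval] at this
            intro hcontra
            exact this (by linarith)
          · have := hgen ⟨Rel.ne, Term.var u, Term.const r⟩ ha i z hiz
            simp only [Term.eval, hzval] at this
            intro hcontra
            exact this (by linarith)
      | const r =>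
        cases rhs with
        | var v =>
          show r ≠ ρ v
          obtain ⟨j, -, hj⟩ := Finset.exists_mem_eq_sup' hne (fun i : Fin k => τ i v - (i:ℝ)*η)
          show r ≠ Finset.univ.sup' hne (fun i : Fin k => τ i v - (i:ℝ)*η)
          rw [hj]
          by_cases hjz : j = z
          · rw [hjz, hzval]
            have := hτa z
            simp [Term.eval] at this
            intro hcontra
            exact this (by linarith)
          · have := hgen ⟨Rel.ne, Term.const r, Term.var v⟩ ha z j (fun h => hjz h.symm)
            simp only [Term.eval, hzval] at this
            intro hcontra
            exact this (by linarith)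
        | const r' =>
          have := hτa z; simpa [Term.eval] using this
  -- Step 6: contradiction with hent
  obtain ⟨i, hi⟩ := hent ρ hSatρ
  have h1 := hi _ (hmem i)
  have h2 : ρ (x i) ≤ c i := by
    simpa [Comp.holds, Rel.holds, Term.eval] using h1
  have h3 := hρge (x i) i
  have h4 := hηD i
  linarith

end QC
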